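/- The function H(x,y) = x·y·exp(−x − x·y − y²/2) is a first integral of the planar Kolmogorov system ẋ = x(−1 + xy + y²), ẏ = y(1 − x − xy); that is, ∂H/∂x · x(−1+xy+y²) + ∂H/∂y · y(1−x−xy) = 0 for all (x,y) ∈ ℝ². -/

import Mathlib

theorem stmt4 : ∀ x y : ℝ,
    deriv (fun x' => x' * y * Real.exp (-x' - x' * y - y ^ 2 / 2)) x *
        (x * (-1 + x * y + y ^ 2)) +
      deriv (fun y' => x * y' * Real.exp (-x - x * y' - y' ^ 2 / 2)) y *
        (y * (1 - x - x * y)) = 0 := by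
  intro x y
  have h1 : HasDerivAt (fun x' : ℝ => x' * y * Real.exp (-x' - x' * y - y ^ 2 / 2))
      (y * Real.exp (-x - x * y - y ^ 2 / 2) +
        x * y * ((-1 - y) * Real.exp (-x - x * y - y ^ 2 / 2))) x := by
    have he : HasDerivAt (fun x' : ℝ => Real.exp (-x' - x' * y - y ^ 2 / 2))
        ((-1 - y) * Real.exp (-x - x * y - y ^ 2 / 2)) x := by
      have hi : HasDerivAt (fun x' : ℝ => -x' - x' * y - y ^ 2 / 2) (-1 - y) x := by
        have := ((hasDerivAt_id x).neg.sub ((hasDerivAt_id x).mul_const y)).sub_const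
          (y ^ 2 / 2)
        simpa using this
      simpa [mul_comm] using hi.exp
    have := (((hasDerivAt_id x).mul_const y).mul he)
    simpa [Pi.mul_def, mul_comm, mul_assoc, mul_left_comm] using this
  have h2 : HasDerivAt (fun y' : ℝ => x * y' * Real.exp (-x - x * y' - y' ^ 2 / 2))
      (x * Real.exp (-x - x * y - y ^ 2 / 2) +
        x * y * ((-x - y) * Real.exp (-x - x * y - y ^ 2 / 2))) y := by
    have he : HasDerivAt (fun y' : ℝ => Real.exp (-x - x * y' - y' ^ 2 / 2))
        ((-x - y) * Real.exp (-x - x * y - y ^ 2 / 2)) y := by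
      have hi : HasDerivAt (fun y' : ℝ => -x - x * y' - y' ^ 2 / 2) (-x - y) y := by
        have h3 : HasDerivAt (fun y' : ℝ => y' ^ 2 / 2) y y := by
          have := (hasDerivAt_pow 2 y).div_const 2
          simpa using this
        have := (((hasDerivAt_const y (-x)).sub
          ((hasDerivAt_id y).const_mul x)).sub h3)
        simpa [Pi.sub_def, mul_comm] using this
      simpa [mul_comm] using hi.exp
    have := (((hasDerivAt_id y).const_mul x).mul he)
    simpa [Pi.mul_def, mul_comm, mul_assoc, mul_left_comm] using this
  rw [h1.deriv, h2.deriv]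
  ring
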